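/- Let G be a graph with v_G vertices and e_G ≥ 1 edges and no isolated vertices, let n ≥ v_G and p ∈ (0,1), q = 1 − p. Then the normalized subgraph count admits the chaos representation Ñ_G^n = (N_G^n − E[N_G^n])/√(Var[N_G^n]) = Σ_{k=1}^{e_G} I_k(f_k), where f_k(b_1,…,b_k) = q^{k/2} p^{e_G−k/2} / ((e_G−k)! · k! · √(Var[N_G^n])) · g_k(b_1,…,b_k). -/

import Mathlib

open MeasureTheory ProbabilityTheory Filter Finset

noncomputable section

namespace PaperC

/-- The sample space `Ω = {-1,1}^ℕ`, coded by `Bool` (`true ↦ +1`). -/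
abbrev SeqSpace := ℕ → Bool

/-- The coordinate Bernoulli variables with values `±1`. -/
def Xc (k : ℕ) (ω : SeqSpace) : ℝ := if ω k then 1 else -1

/-- The centered, normalized variables `Y_k = (q - p + X_k)/(2√(pq))`. -/
def Yc (p : ℝ) (k : ℕ) (ω : SeqSpace) : ℝ :=
  ((1 - p) - p + Xc k ω) / (2 * Real.sqrt (p * (1 - p)))

/-- The discrete multiple stochastic integral of order `k`. -/
def MI (p : ℝ) (k : ℕ) (f : (Fin k → ℕ) → ℝ) (ω : SeqSpace) : ℝ :=
  ∑' i : Fin k → ℕ, f i * ∏ j : Fin k, Yc p (i j) ω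

/-- `μ` makes the coordinates i.i.d. Bernoulli with `P(X_k = 1) = p`. -/
structure IsBernoulliSeq (μ : Measure SeqSpace) (p : ℝ) : Prop where
  prob : IsProbabilityMeasure μ
  indep : iIndepFun (fun k (ω : SeqSpace) => ω k) μ
  marginal : ∀ k, μ {ω | ω k = true} = ENNReal.ofReal p

/-- Concatenation of three tuples (of announced length `d`; genuine when `d = a+b+c`). -/
def glue {a b c d : ℕ} (x : Fin a → ℕ) (y : Fin b → ℕ) (z : Fin c → ℕ) : Fin d → ℕ :=
  fun i => if h1 : (i : ℕ) < a then x ⟨i, h1⟩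
    else if h2 : (i : ℕ) - a < b then y ⟨(i : ℕ) - a, h2⟩
    else if h3 : (i : ℕ) - a - b < c then z ⟨(i : ℕ) - a - b, h3⟩ else 0

/-- The contraction `f ⋆_k^l g`. -/
def contr (n m k l : ℕ) (f : (Fin n → ℕ) → ℝ) (g : (Fin m → ℕ) → ℝ)
    (y : Fin (k - l) → ℕ) (s : Fin (n - k) → ℕ) (t : Fin (m - k) → ℕ) : ℝ :=
  ∑' x : Fin l → ℕ, f (glue x y s) * g (glue x y t)

/-- The squared `ℓ²` norm `‖f ⋆_k^l g‖²`. -/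
def contrNormSq (n m k l : ℕ) (f : (Fin n → ℕ) → ℝ) (g : (Fin m → ℕ) → ℝ) : ℝ :=
  ∑' q : (Fin (k - l) → ℕ) × (Fin (n - k) → ℕ) × (Fin (m - k) → ℕ),
    (contr n m k l f g q.1 q.2.1 q.2.2) ^ 2

/-- Concatenation of two tuples (of announced length `c`; genuine when `c = a+b`). -/
def pairGlue {a b c : ℕ} (x : Fin a → ℕ) (y : Fin b → ℕ) : Fin c → ℕ :=
  fun i => if h1 : (i : ℕ) < a then x ⟨i, h1⟩
    else if h2 : (i : ℕ) - a < b then y ⟨(i : ℕ) - a, h2⟩ else 0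

/-- `G` has no isolated vertices. -/
def NoIsolatedVertices {V : Type*} (G : SimpleGraph V) : Prop :=
  ∀ v : V, ∃ w : V, G.Adj v w

/-- `edge` enumerates the (non-diagonal) edges of the complete graph `K_n`
by the initial segment `{0, …, M-1}` of `ℕ`. -/
structure IsEdgeEnum (n : ℕ) (edge : ℕ → Sym2 (Fin n)) (M : ℕ) : Prop where
  nondiag : ∀ j, j < M → ¬ (edge j).IsDiag
  inj : ∀ j1, j1 < M → ∀ j2, j2 < M → edge j1 = edge j2 → j1 = j2
  surj : ∀ e : Sym2 (Fin n), ¬ e.IsDiag → ∃ j, j < M ∧ edge j = e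

/-- `E_G ⊆ ℕ^{e_G}`: tuples of indices of pairwise distinct edges of `K_n`
whose union forms a graph isomorphic to `G`. -/
def EGset {V : Type*} (G : SimpleGraph V) (n : ℕ) (edge : ℕ → Sym2 (Fin n))
    (M eG : ℕ) : Set (Fin eG → ℕ) :=
  {b | Function.Injective b ∧ (∀ i, b i < M) ∧
    ∃ φ : V ↪ Fin n, (Set.range fun i => edge (b i)) = Sym2.map φ '' G.edgeSet}

/-- `g_k(b) = Σ_{a ∈ ℕ^{e_G - k}} 1_{E_G}(a, b)`. -/
def gker {V : Type*} (G : SimpleGraph V) (n : ℕ) (edge : ℕ → Sym2 (Fin n))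
    (M eG k : ℕ) (b : Fin k → ℕ) : ℝ :=
  ∑' a : Fin (eG - k) → ℕ,
    (EGset G n edge M eG).indicator (fun _ => (1 : ℝ)) (pairGlue a b)

/-- `N_G^n(ω)`: the number of subgraphs of the realized random graph isomorphic
to `G`, counted as index sets of edge subsets forming a copy of `G`. -/
def NGcount {V : Type*} (G : SimpleGraph V) (n : ℕ) (edge : ℕ → Sym2 (Fin n))
    (M eG : ℕ) (ω : SeqSpace) : ℕ :=
  Nat.card {S : Set ℕ //
    (∃ b : Fin eG → ℕ, b ∈ EGset G n edge M eG ∧ S = Set.range b) ∧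
    ∀ j ∈ S, ω j = true}


/-! ### Auxiliary material for the proof -/

section Aux

/-- Left coordinates of `pairGlue`. -/
lemma pairGlue_left {a b c : ℕ} (x : Fin a → ℕ) (y : Fin b → ℕ) (i : Fin c)
    (h : (i : ℕ) < a) : pairGlue x y i = x ⟨i, h⟩ := dif_pos h

/-- Right coordinates of `pairGlue`. -/
lemma pairGlue_right {a b c : ℕ} (x : Fin a → ℕ) (y : Fin b → ℕ) (i : Fin c)
    (h1 : ¬ (i : ℕ) < a) (h2 : (i : ℕ) - a < b) :
    pairGlue x y i = y ⟨(i : ℕ) - a, h2⟩ := by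
  rw [pairGlue, dif_neg h1, dif_pos h2]

lemma pairGlue_apply_lt {a b c : ℕ} (x : Fin a → ℕ) (y : Fin b → ℕ) (i : ℕ)
    (h : i < a) (hc : i < c) : pairGlue x y (⟨i, hc⟩ : Fin c) = x ⟨i, h⟩ :=
  dif_pos h

lemma pairGlue_apply_ge {a b c : ℕ} (x : Fin a → ℕ) (y : Fin b → ℕ) (i : ℕ)
    (h1 : ¬ i < a) (h2 : i - a < b) (hc : i < c) :
    pairGlue x y (⟨i, hc⟩ : Fin c) = y ⟨i - a, h2⟩ := by
  rw [pairGlue, dif_neg h1, dif_pos h2]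

/-- The order-preserving embedding of `Fin k` onto the last `k` indices of `Fin e`. -/
def emb (e k : ℕ) (hk : k ≤ e) (j : Fin k) : Fin e :=
  ⟨e - k + (j : ℕ), by have := j.isLt; omega⟩

lemma emb_injective (e k : ℕ) (hk : k ≤ e) : Function.Injective (emb e k hk) := by
  intro a b h
  have : e - k + (a : ℕ) = e - k + (b : ℕ) := congrArg Fin.val h
  exact Fin.ext (by omega)

/-- The last `k` indices of `Fin e`. -/
def lastIdx (e k : ℕ) : Finset (Fin e) :=
  Finset.univ.filter (fun i => e - k ≤ (i : ℕ))

lemma lastIdx_eq_image (e k : ℕ) (hk : k ≤ e) :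
    lastIdx e k = Finset.image (emb e k hk) Finset.univ := by
  ext i
  simp only [lastIdx, Finset.mem_filter, Finset.mem_univ, true_and, Finset.mem_image]
  constructor
  · intro h
    have hi := i.isLt
    refine ⟨⟨(i : ℕ) - (e - k), by omega⟩, ?_⟩
    exact Fin.ext (by simp [emb]; omega)
  · rintro ⟨j, rfl⟩
    simp [emb]

lemma lastIdx_zero (e : ℕ) : lastIdx e 0 = ∅ := by
  ext i
  simp only [lastIdx, Finset.mem_filter, Finset.mem_univ, true_and, Finset.notMem_empty,
    iff_false]
  have := i.isLt
  omega

lemma card_lastIdx (e k : ℕ) (hk : k ≤ e) : (lastIdx e k).card = k := by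
  rw [lastIdx_eq_image e k hk,
    Finset.card_image_of_injective _ (emb_injective e k hk)]
  simp

/-- Membership facts for `EGset`. -/
lemma EGset_injective {V : Type*} {G : SimpleGraph V} {n M eG : ℕ}
    {edge : ℕ → Sym2 (Fin n)} {b : Fin eG → ℕ} (hb : b ∈ EGset G n edge M eG) :
    Function.Injective b := hb.1

lemma EGset_lt {V : Type*} {G : SimpleGraph V} {n M eG : ℕ}
    {edge : ℕ → Sym2 (Fin n)} {b : Fin eG → ℕ} (hb : b ∈ EGset G n edge M eG) :
    ∀ i, b i < M := hb.2.1

lemma EGset_comp_perm {V : Type*} {G : SimpleGraph V} {n M eG : ℕ}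
    {edge : ℕ → Sym2 (Fin n)} (σ : Equiv.Perm (Fin eG)) {b : Fin eG → ℕ}
    (hb : b ∈ EGset G n edge M eG) : b ∘ σ ∈ EGset G n edge M eG := by
  obtain ⟨hinj, hlt, φ, hφ⟩ := hb
  refine ⟨hinj.comp σ.injective, fun i => hlt _, φ, ?_⟩
  rw [← hφ]
  exact σ.surjective.range_comp (fun i => edge (b i))

lemma EGset_finite {V : Type*} (G : SimpleGraph V) (n M eG : ℕ)
    (edge : ℕ → Sym2 (Fin n)) : (EGset G n edge M eG).Finite := by
  refine Set.Finite.subset (Set.Finite.pi (fun _ : Fin eG => Set.finite_Iio M)) ?_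
  intro b hb
  rw [Set.mem_univ_pi]
  exact fun i => hb.2.1 i

/-- The key counting identity: copies of the graph (as edge-index sets) all of whose
edges are present, counted with multiplicity `e!`, are the admissible tuples whose
coordinates are all present. -/
lemma card_mul_factorial (e : ℕ) (B : Set (Fin e → ℕ))
    (hinj : ∀ b ∈ B, Function.Injective b)
    (hperm : ∀ (σ : Equiv.Perm (Fin e)) (b : Fin e → ℕ), b ∈ B → b ∘ σ ∈ B)
    (ω : SeqSpace) :
    Nat.card {S : Set ℕ //
        (∃ b : Fin e → ℕ, b ∈ B ∧ S = Set.range b) ∧ ∀ j ∈ S, ω j = true}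
        * Nat.factorial e
      = Nat.card {b : Fin e → ℕ // b ∈ B ∧ ∀ i, ω (b i) = true} := by
  classical
  let Copy := {S : Set ℕ //
    (∃ b : Fin e → ℕ, b ∈ B ∧ S = Set.range b) ∧ ∀ j ∈ S, ω j = true}
  let Good := {b : Fin e → ℕ // b ∈ B ∧ ∀ i, ω (b i) = true}
  let rep : Copy → (Fin e → ℕ) := fun S => S.2.1.choose
  have hrep1 : ∀ S : Copy, rep S ∈ B := fun S => S.2.1.choose_spec.1
  have hrep2 : ∀ S : Copy, S.1 = Set.range (rep S) := fun S => S.2.1.choose_spec.2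
  let Φ : Copy × Equiv.Perm (Fin e) → Good := fun x =>
    ⟨rep x.1 ∘ x.2, hperm _ _ (hrep1 x.1), fun i => x.1.2.2 _ (by
      rw [hrep2 x.1]; exact Set.mem_range_self _)⟩
  have hbij : Function.Bijective Φ := by
    constructor
    · rintro ⟨S, σ⟩ ⟨S', σ'⟩ h
      have hv : rep S ∘ σ = rep S' ∘ σ' := congrArg Subtype.val h
      have hr : S.1 = S'.1 := by
        rw [hrep2 S, hrep2 S', ← σ.surjective.range_comp (rep S),
          ← σ'.surjective.range_comp (rep S'), hv]
      have h1 : S = S' := Subtype.ext hr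
      subst h1
      have h2 : σ = σ' := Equiv.ext fun i => hinj _ (hrep1 S) (congrFun hv i)
      rw [h2]
    · rintro ⟨b, hbB, hbω⟩
      have hScopy : (∃ b' : Fin e → ℕ, b' ∈ B ∧ Set.range b = Set.range b') ∧
          ∀ j ∈ Set.range b, ω j = true :=
        ⟨⟨b, hbB, rfl⟩, by rintro j ⟨i, rfl⟩; exact hbω i⟩
      let S : Copy := ⟨Set.range b, hScopy⟩
      let σ : Equiv.Perm (Fin e) :=
        (Equiv.ofInjective b (hinj b hbB)).trans
          ((Equiv.setCongr (hrep2 S)).trans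
            (Equiv.ofInjective _ (hinj _ (hrep1 S))).symm)
      refine ⟨(S, σ), ?_⟩
      apply Subtype.ext
      funext i
      show rep S (σ i) = b i
      simp only [σ, Equiv.trans_apply]
      rw [Equiv.apply_ofInjective_symm (hinj _ (hrep1 S))]
      simp
  have hpc : Nat.card (Equiv.Perm (Fin e)) = Nat.factorial e := by
    rw [Nat.card_eq_fintype_card, Fintype.card_perm, Fintype.card_fin]
  calc Nat.card Copy * Nat.factorial e
      = Nat.card Copy * Nat.card (Equiv.Perm (Fin e)) := by rw [hpc]
    _ = Nat.card (Copy × Equiv.Perm (Fin e)) := (Nat.card_prod _ _).symm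
    _ = Nat.card Good := Nat.card_congr (Equiv.ofBijective Φ hbij)

/-- Indicator identity for one Bernoulli variable. -/
lemma ind_eq (p : ℝ) (hp0 : 0 < p) (hp1 : p < 1) (j : ℕ) (ω : SeqSpace) :
    (if ω j then (1 : ℝ) else 0) = p + Real.sqrt (p * (1 - p)) * Yc p j ω := by
  have hs : Real.sqrt (p * (1 - p)) ≠ 0 :=
    ne_of_gt (Real.sqrt_pos.mpr (by nlinarith))
  unfold Yc Xc
  rcases Bool.eq_false_or_eq_true (ω j) with h | h <;> rw [h] <;> simp only [if_true, if_false,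
    Bool.false_eq_true, Bool.true_eq_false, reduceIte]
  · have h1 : ((1 - p) - p + 1) / (2 * Real.sqrt (p * (1 - p)))
        = (1 - p) / Real.sqrt (p * (1 - p)) := by
      rw [div_eq_div_iff (mul_ne_zero two_ne_zero hs) hs]; ring
    rw [h1, mul_comm, div_mul_cancel₀ _ hs]; ring
  · have h1 : ((1 - p) - p + -1) / (2 * Real.sqrt (p * (1 - p)))
        = (-p) / Real.sqrt (p * (1 - p)) := by
      rw [div_eq_div_iff (mul_ne_zero two_ne_zero hs) hs]; ring
    rw [h1, mul_comm, div_mul_cancel₀ _ hs]; ring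

/-- The building block `S_k = Σ_{d ∈ B} Π_{i ∈ lastIdx} Y_{d i}`. -/
def Sq (e : ℕ) (Bf : Finset (Fin e → ℕ)) (p : ℝ) (ω : SeqSpace) (k : ℕ) : ℝ :=
  ∑ d ∈ Bf, ∏ i ∈ lastIdx e k, Yc p (d i) ω

lemma Sq_zero (e : ℕ) (Bf : Finset (Fin e → ℕ)) (p : ℝ) (ω : SeqSpace) :
    Sq e Bf p ω 0 = Bf.card := by
  simp [Sq, lastIdx_zero]

/-- Permutation invariance: for any `k`-subset `T` of indices, summing the partial
products over the admissible tuples does not depend on `T`. -/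
lemma sum_prod_perm (e : ℕ) (B : Set (Fin e → ℕ)) (hBfin : B.Finite)
    (hperm : ∀ (σ : Equiv.Perm (Fin e)) (b : Fin e → ℕ), b ∈ B → b ∘ σ ∈ B)
    (p : ℝ) (ω : SeqSpace) {k : ℕ} (hk : k ≤ e) {T : Finset (Fin e)}
    (hT : T.card = k) :
    ∑ b ∈ hBfin.toFinset, ∏ i ∈ T, Yc p (b i) ω = Sq e hBfin.toFinset p ω k := by
  classical
  have cardE : (lastIdx e k).card = k := card_lastIdx e k hk
  have hcard1 : Fintype.card {x // x ∈ lastIdx e k} = Fintype.card {x // x ∈ T} := by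
    rw [Fintype.card_coe, Fintype.card_coe, cardE, hT]
  let g : {x // x ∈ lastIdx e k} ≃ {x // x ∈ T} := Fintype.equivOfCardEq hcard1
  have hcard2 : Fintype.card {x // ¬ x ∈ lastIdx e k} = Fintype.card {x // ¬ x ∈ T} := by
    rw [Fintype.card_subtype_compl, Fintype.card_subtype_compl, hcard1]
  let gc : {x // ¬ x ∈ lastIdx e k} ≃ {x // ¬ x ∈ T} := Fintype.equivOfCardEq hcard2
  let σ : Equiv.Perm (Fin e) := Equiv.subtypeCongr g gc
  have hσ : ∀ i, i ∈ lastIdx e k → σ i ∈ T := by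
    intro i h
    have : σ i = (g ⟨i, h⟩ : Fin e) := by
      simp [σ, Equiv.subtypeCongr, h]
    rw [this]
    exact (g ⟨i, h⟩).2
  have himg : (lastIdx e k).image σ = T := by
    apply Finset.eq_of_subset_of_card_le
    · intro x hx
      obtain ⟨i, hi, rfl⟩ := Finset.mem_image.mp hx
      exact hσ i hi
    · rw [Finset.card_image_of_injective _ σ.injective, cardE, hT]
  calc ∑ b ∈ hBfin.toFinset, ∏ i ∈ T, Yc p (b i) ω
      = ∑ b ∈ hBfin.toFinset, ∏ i ∈ (lastIdx e k).image σ, Yc p (b i) ω := by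
        rw [himg]
    _ = ∑ b ∈ hBfin.toFinset, ∏ i ∈ lastIdx e k, Yc p ((b ∘ σ) i) ω := by
        refine Finset.sum_congr rfl fun b _ => ?_
        rw [Finset.prod_image (fun x _ y _ h => σ.injective h)]
        rfl
    _ = ∑ b ∈ hBfin.toFinset, ∏ i ∈ lastIdx e k, Yc p (b i) ω := by
        refine Finset.sum_nbij' (fun b => b ∘ σ) (fun b => b ∘ σ.symm) ?_ ?_ ?_ ?_ ?_
        · intro b hb
          rw [Set.Finite.mem_toFinset] at hb ⊢
          exact hperm σ b hb
        · intro b hb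
          rw [Set.Finite.mem_toFinset] at hb ⊢
          exact hperm σ.symm b hb
        · intro b _
          funext i
          simp
        · intro b _
          funext i
          simp
        · intro b _
          rfl

/-- Binomial expansion of the product of indicators over the admissible tuples. -/
lemma sum_ind_eq (e : ℕ) (B : Set (Fin e → ℕ)) (hBfin : B.Finite)
    (hperm : ∀ (σ : Equiv.Perm (Fin e)) (b : Fin e → ℕ), b ∈ B → b ∘ σ ∈ B)
    (p : ℝ) (hp0 : 0 < p) (hp1 : p < 1) (ω : SeqSpace) :
    ∑ b ∈ hBfin.toFinset, ∏ i : Fin e, (if ω (b i) then (1 : ℝ) else 0)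
      = ∑ k ∈ Finset.range (e + 1),
          p ^ (e - k) * Real.sqrt (p * (1 - p)) ^ k * (e.choose k : ℝ) *
            Sq e hBfin.toFinset p ω k := by
  classical
  calc ∑ b ∈ hBfin.toFinset, ∏ i : Fin e, (if ω (b i) then (1 : ℝ) else 0)
      = ∑ b ∈ hBfin.toFinset, ∏ i : Fin e,
          (Real.sqrt (p * (1 - p)) * Yc p (b i) ω + p) := by
        refine Finset.sum_congr rfl fun b _ => Finset.prod_congr rfl fun i _ => ?_
        rw [ind_eq p hp0 hp1 (b i) ω]; ring
    _ = ∑ b ∈ hBfin.toFinset, ∑ T ∈ (Finset.univ : Finset (Fin e)).powerset,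
          (∏ i ∈ T, Real.sqrt (p * (1 - p)) * Yc p (b i) ω) *
            ∏ _i ∈ Finset.univ \ T, p := by
        refine Finset.sum_congr rfl fun b _ => ?_
        rw [Finset.prod_add]
    _ = ∑ T ∈ (Finset.univ : Finset (Fin e)).powerset, ∑ b ∈ hBfin.toFinset,
          (∏ i ∈ T, Real.sqrt (p * (1 - p)) * Yc p (b i) ω) *
            ∏ _i ∈ Finset.univ \ T, p := Finset.sum_comm
    _ = ∑ k ∈ Finset.range (e + 1),
          ∑ T ∈ Finset.powersetCard k (Finset.univ : Finset (Fin e)),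
            ∑ b ∈ hBfin.toFinset,
              (∏ i ∈ T, Real.sqrt (p * (1 - p)) * Yc p (b i) ω) *
                ∏ _i ∈ Finset.univ \ T, p := by
        rw [Finset.sum_powerset]
        rw [Finset.card_univ, Fintype.card_fin]
    _ = ∑ k ∈ Finset.range (e + 1),
          p ^ (e - k) * Real.sqrt (p * (1 - p)) ^ k * (e.choose k : ℝ) *
            Sq e hBfin.toFinset p ω k := by
        refine Finset.sum_congr rfl fun k hk => ?_
        rw [Finset.mem_range, Nat.lt_succ_iff] at hk
        have hstep : ∀ T ∈ Finset.powersetCard k (Finset.univ : Finset (Fin e)),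
            ∑ b ∈ hBfin.toFinset,
              (∏ i ∈ T, Real.sqrt (p * (1 - p)) * Yc p (b i) ω) *
                ∏ _i ∈ Finset.univ \ T, p
            = p ^ (e - k) * Real.sqrt (p * (1 - p)) ^ k *
                Sq e hBfin.toFinset p ω k := by
          intro T hT
          rw [Finset.mem_powersetCard] at hT
          have hTc : T.card = k := hT.2
          have h1 : ∀ b : Fin e → ℕ,
              (∏ i ∈ T, Real.sqrt (p * (1 - p)) * Yc p (b i) ω) *
                  ∏ _i ∈ Finset.univ \ T, p
              = p ^ (e - k) * Real.sqrt (p * (1 - p)) ^ k *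
                  ∏ i ∈ T, Yc p (b i) ω := by
            intro b
            rw [Finset.prod_mul_distrib, Finset.prod_const, Finset.prod_const,
              Finset.card_sdiff_of_subset (Finset.subset_univ T), Finset.card_univ,
              Fintype.card_fin, hTc]
            ring
          rw [Finset.sum_congr rfl (fun b _ => h1 b), ← Finset.mul_sum,
            sum_prod_perm e B hBfin hperm p ω hk hTc]
        rw [Finset.sum_congr rfl hstep, Finset.sum_const, Finset.card_powersetCard,
          Finset.card_univ, Fintype.card_fin, nsmul_eq_mul]
        ring

/-- Reduction of the multiple stochastic integral against the kernel `g_k` to a finite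
sum over the admissible tuples. -/
lemma MI_gker {V : Type*} (G : SimpleGraph V) (n : ℕ) (edge : ℕ → Sym2 (Fin n))
    (M eG : ℕ) (p : ℝ) (ω : SeqSpace) (k : ℕ) (hk : k ≤ eG) (C : ℝ) :
    MI p k (fun b : Fin k → ℕ => C * gker G n edge M eG k b) ω
      = C * Sq eG (EGset_finite G n M eG edge).toFinset p ω k := by
  classical
  have hmem : ∀ b, b ∈ (EGset_finite G n M eG edge).toFinset ↔ b ∈ EGset G n edge M eG :=
    fun b => Set.Finite.mem_toFinset _
  -- `gker` as a finite sum
  have hg : ∀ c : Fin k → ℕ, gker G n edge M eG k c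
      = ∑ a ∈ Fintype.piFinset (fun _ : Fin (eG - k) => Finset.range M),
          (EGset G n edge M eG).indicator (fun _ => (1 : ℝ)) (pairGlue a c) := by
    intro c
    rw [gker]
    refine tsum_eq_sum ?_
    intro a ha
    rw [Fintype.mem_piFinset] at ha
    push_neg at ha
    obtain ⟨i, hi⟩ := ha
    rw [Finset.mem_range, not_lt] at hi
    apply Set.indicator_of_notMem
    intro hmem'
    have hilt : (i : ℕ) < eG := by have := i.isLt; omega
    have hlt := hmem'.2.1 ⟨(i : ℕ), hilt⟩
    rw [pairGlue_apply_lt a c (i : ℕ) i.isLt hilt] at hlt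
    simp only [Fin.eta] at hlt
    omega
  -- the `tsum` reduces to a finite sum
  have hvanish : ∀ c : Fin k → ℕ,
      c ∉ Fintype.piFinset (fun _ : Fin k => Finset.range M) →
      C * gker G n edge M eG k c * ∏ j : Fin k, Yc p (c j) ω = 0 := by
    intro c hc
    rw [Fintype.mem_piFinset] at hc
    push_neg at hc
    obtain ⟨j, hj⟩ := hc
    rw [Finset.mem_range, not_lt] at hj
    have hg0 : gker G n edge M eG k c = 0 := by
      rw [gker]
      have hall : ∀ a : Fin (eG - k) → ℕ,
          (EGset G n edge M eG).indicator (fun _ => (1 : ℝ)) (pairGlue a c) = 0 := by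
        intro a
        apply Set.indicator_of_notMem
        intro hmem'
        have hjk := j.isLt
        have hilt : eG - k + (j : ℕ) < eG := by omega
        have hlt := hmem'.2.1 ⟨eG - k + (j : ℕ), hilt⟩
        rw [pairGlue_apply_ge a c (eG - k + (j : ℕ)) (by omega)
          (by simpa using hjk) hilt] at hlt
        have hcj : c ⟨eG - k + (j : ℕ) - (eG - k), by simpa using hjk⟩ = c j := by
          congr 1
          exact Fin.ext (by simp)
        rw [hcj] at hlt
        omega
      simp only [hall, tsum_zero]
    rw [hg0, mul_zero, zero_mul]
  rw [MI, tsum_eq_sum hvanish]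
  -- pull out the constant
  have hC : ∀ c ∈ Fintype.piFinset (fun _ : Fin k => Finset.range M),
      C * gker G n edge M eG k c * ∏ j : Fin k, Yc p (c j) ω
      = C * ∑ a ∈ Fintype.piFinset (fun _ : Fin (eG - k) => Finset.range M),
          (EGset G n edge M eG).indicator (fun _ => (1 : ℝ)) (pairGlue a c) *
            ∏ j : Fin k, Yc p (c j) ω := by
    intro c _
    rw [hg c, mul_assoc, Finset.sum_mul]
  rw [Finset.sum_congr rfl hC, ← Finset.mul_sum]
  congr 1
  -- the double sum is a sum over `Fin eG`-tuples
  have hprod : ∀ (a : Fin (eG - k) → ℕ) (c : Fin k → ℕ),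
      ∏ i ∈ lastIdx eG k, Yc p (pairGlue a c i) ω = ∏ j : Fin k, Yc p (c j) ω := by
    intro a c
    rw [lastIdx_eq_image eG k hk,
      Finset.prod_image (fun x _ y _ h => emb_injective eG k hk h)]
    refine Finset.prod_congr rfl fun j _ => ?_
    congr 1
    have hjk := j.isLt
    have hilt : eG - k + (j : ℕ) < eG := by omega
    rw [show emb eG k hk j = ⟨eG - k + (j : ℕ), hilt⟩ from rfl]
    rw [pairGlue_apply_ge a c (eG - k + (j : ℕ)) (by omega) (by simpa using hjk) hilt]
    congr 1
    exact Fin.ext (by simp)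
  have hswap : ∑ c ∈ Fintype.piFinset (fun _ : Fin k => Finset.range M),
      ∑ a ∈ Fintype.piFinset (fun _ : Fin (eG - k) => Finset.range M),
        (EGset G n edge M eG).indicator (fun _ => (1 : ℝ)) (pairGlue a c) *
          ∏ j : Fin k, Yc p (c j) ω
      = ∑ d ∈ Fintype.piFinset (fun _ : Fin eG => Finset.range M),
          (EGset G n edge M eG).indicator (fun _ => (1 : ℝ)) d *
            ∏ i ∈ lastIdx eG k, Yc p (d i) ω := by
    rw [← Finset.sum_product']
    refine Finset.sum_nbij' (fun x => pairGlue x.2 x.1)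
      (fun d => (fun j : Fin k => d (emb eG k hk j),
        fun i : Fin (eG - k) => d ⟨(i : ℕ), by have := i.isLt; omega⟩)) ?_ ?_ ?_ ?_ ?_
    · rintro ⟨c, a⟩ hx
      rw [Finset.mem_product] at hx
      rw [Fintype.mem_piFinset]
      intro i
      rw [Finset.mem_range]
      show pairGlue a c i < M
      rw [← Fin.eta i i.isLt]
      by_cases h : (i : ℕ) < eG - k
      · rw [pairGlue_apply_lt a c (i : ℕ) h i.isLt]
        have := (Fintype.mem_piFinset.mp hx.2) ⟨(i : ℕ), h⟩
        rwa [Finset.mem_range] at this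
      · have hik : (i : ℕ) - (eG - k) < k := by have := i.isLt; omega
        rw [pairGlue_apply_ge a c (i : ℕ) h hik i.isLt]
        have := (Fintype.mem_piFinset.mp hx.1) ⟨(i : ℕ) - (eG - k), hik⟩
        rwa [Finset.mem_range] at this
    · intro d hd
      rw [Finset.mem_product]
      constructor <;> rw [Fintype.mem_piFinset] <;> intro i <;>
        exact (Fintype.mem_piFinset.mp hd) _
    · rintro ⟨c, a⟩ _
      beta_reduce
      refine Prod.ext ?_ ?_
      · funext j
        show pairGlue a c (emb eG k hk j) = c j
        have hjk := j.isLt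
        have hilt : eG - k + (j : ℕ) < eG := by omega
        rw [show emb eG k hk j = ⟨eG - k + (j : ℕ), hilt⟩ from rfl]
        rw [pairGlue_apply_ge a c (eG - k + (j : ℕ)) (by omega) (by simpa using hjk) hilt]
        congr 1
        exact Fin.ext (by simp)
      · funext i
        show pairGlue a c ⟨(i : ℕ), _⟩ = a i
        rw [pairGlue_apply_lt a c (i : ℕ) i.isLt _]
    · intro d _
      beta_reduce
      funext i
      show pairGlue _ _ i = d i
      rw [← Fin.eta i i.isLt]
      by_cases h : (i : ℕ) < eG - k
      · rw [pairGlue_apply_lt _ _ (i : ℕ) h i.isLt]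
      · have hik : (i : ℕ) - (eG - k) < k := by have := i.isLt; omega
        rw [pairGlue_apply_ge _ _ (i : ℕ) h hik i.isLt]
        show d (emb eG k hk _) = d _
        congr 1
        exact Fin.ext (by simp [emb]; omega)
    · rintro ⟨c, a⟩ _
      beta_reduce
      rw [hprod a c]
  rw [hswap]
  -- restrict to the admissible tuples
  have hsub : (EGset_finite G n M eG edge).toFinset
      ⊆ Fintype.piFinset (fun _ : Fin eG => Finset.range M) := by
    intro d hd
    rw [hmem] at hd
    rw [Fintype.mem_piFinset]
    intro i
    rw [Finset.mem_range]
    exact hd.2.1 i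
  have hre : ∀ d ∈ Fintype.piFinset (fun _ : Fin eG => Finset.range M),
      (EGset G n edge M eG).indicator (fun _ => (1 : ℝ)) d *
          ∏ i ∈ lastIdx eG k, Yc p (d i) ω
      = if d ∈ (EGset_finite G n M eG edge).toFinset then
          ∏ i ∈ lastIdx eG k, Yc p (d i) ω else 0 := by
    intro d _
    rw [Set.indicator_apply]
    by_cases h : d ∈ EGset G n edge M eG
    · rw [if_pos h, if_pos ((hmem d).mpr h), one_mul]
    · rw [if_neg h, if_neg (fun hh => h ((hmem d).mp hh)), zero_mul]
  rw [Finset.sum_congr rfl hre, Finset.sum_ite_mem,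
    Finset.inter_eq_right.mpr hsub, Sq]

/-- The probability that the `e` distinct edges indexed by `b` are all present. -/
lemma meas_iInter_eq {μ : Measure SeqSpace} {p : ℝ} (hμ : IsBernoulliSeq μ p)
    {e : ℕ} (b : Fin e → ℕ) (hb : Function.Injective b) :
    μ (⋂ i : Fin e, {ω : SeqSpace | ω (b i) = true}) = ENNReal.ofReal p ^ e := by
  classical
  have h1 : (⋂ i : Fin e, {ω : SeqSpace | ω (b i) = true})
      = ⋂ j ∈ Finset.image b Finset.univ, {ω : SeqSpace | ω j = true} := by
    ext ω
    simp only [Set.mem_iInter, Set.mem_setOf_eq, Finset.mem_image, Finset.mem_univ,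
      true_and]
    constructor
    · rintro h j ⟨i, rfl⟩; exact h i
    · intro h i; exact h (b i) ⟨i, rfl⟩
  rw [h1, hμ.indep.meas_biInter (fun j _ => ⟨{true}, measurableSet_singleton true, by
    ext ω'; simp⟩)]
  rw [Finset.prod_congr rfl (fun j _ => hμ.marginal j), Finset.prod_const,
    Finset.card_image_of_injective _ hb, Finset.card_univ, Fintype.card_fin]

/-- Splitting the power `q^{k/2} p^{e-k/2}` into `p^{e-k} (pq)^{k/2}`. -/
lemma rpow_split (p : ℝ) (hp0 : 0 < p) (hp1 : p < 1) (e k : ℕ) (hk : k ≤ e) :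
    (1 - p) ^ ((k : ℝ) / 2) * p ^ ((e : ℝ) - (k : ℝ) / 2)
      = p ^ (e - k) * Real.sqrt (p * (1 - p)) ^ k := by
  have hq : (0 : ℝ) < 1 - p := by linarith
  have h1 : Real.sqrt (p * (1 - p)) ^ k
      = p ^ ((k : ℝ) / 2) * (1 - p) ^ ((k : ℝ) / 2) := by
    rw [← Real.rpow_natCast (Real.sqrt (p * (1 - p))) k, Real.sqrt_eq_rpow,
      ← Real.rpow_mul (by positivity : (0:ℝ) ≤ p * (1 - p)),
      show (1 / 2 : ℝ) * (k : ℝ) = (k : ℝ) / 2 by ring,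
      Real.mul_rpow hp0.le hq.le]
  rw [h1, ← Real.rpow_natCast p (e - k), Nat.cast_sub hk, ← mul_assoc,
    ← Real.rpow_add hp0, show (e : ℝ) - (k : ℝ) + (k : ℝ) / 2 = (e : ℝ) - (k : ℝ) / 2 by ring]
  ring

end Aux

/-- Lemma 4.1: the renormalized subgraph count admits the chaos
representation `Ñ_G = Σ_{k=1}^{e_G} I_k(f_k)` with
`f_k = q^{k/2} p^{e_G - k/2} g_k / ((e_G - k)! k! √Var[N_G])`. -/
theorem chaos_representation_subgraph_count {V : Type} [Fintype V] (G : SimpleGraph V)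
    (hE : G.edgeSet.Nonempty) (hIso : NoIsolatedVertices G)
    (n : ℕ) (hn : Fintype.card V ≤ n)
    (edge : ℕ → Sym2 (Fin n)) (hedge : IsEdgeEnum n edge (Nat.choose n 2))
    (p : ℝ) (hp0 : 0 < p) (hp1 : p < 1)
    (μ : Measure SeqSpace) (hμ : IsBernoulliSeq μ p) :
    ∀ ω : SeqSpace,
      ((NGcount G n edge (Nat.choose n 2) G.edgeSet.ncard ω : ℝ)
          - ∫ x, (NGcount G n edge (Nat.choose n 2) G.edgeSet.ncard x : ℝ) ∂μ)
        / Real.sqrt (variance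
            (fun x => (NGcount G n edge (Nat.choose n 2) G.edgeSet.ncard x : ℝ)) μ)
      = ∑ k ∈ Finset.Icc 1 G.edgeSet.ncard,
          MI p k (fun b : Fin k → ℕ =>
            (1 - p) ^ ((k : ℝ) / 2) * p ^ ((G.edgeSet.ncard : ℝ) - (k : ℝ) / 2)
              / ((Nat.factorial (G.edgeSet.ncard - k) : ℝ) * (Nat.factorial k : ℝ)
                  * Real.sqrt (variance
                      (fun x =>
                        (NGcount G n edge (Nat.choose n 2) G.edgeSet.ncard x : ℝ)) μ))
              * gker G n edge (Nat.choose n 2) G.edgeSet.ncard k b) ω := by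
  classical
  intro ω
  haveI := hμ.prob
  set e := G.edgeSet.ncard with he
  set M := Nat.choose n 2 with hM
  set v := Real.sqrt (variance (fun x => (NGcount G n edge M e x : ℝ)) μ) with hv
  have hBfin := EGset_finite G n M e edge
  set Bf := hBfin.toFinset with hBf
  have hmemBf : ∀ b, b ∈ Bf ↔ b ∈ EGset G n edge M e :=
    fun b => Set.Finite.mem_toFinset _
  have hperm : ∀ (σ : Equiv.Perm (Fin e)) (b : Fin e → ℕ),
      b ∈ EGset G n edge M e → b ∘ σ ∈ EGset G n edge M e :=
    fun σ b hb => EGset_comp_perm σ hb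
  have hinj : ∀ b ∈ EGset G n edge M e, Function.Injective b :=
    fun b hb => EGset_injective hb
  have hfe : (e.factorial : ℝ) ≠ 0 := Nat.cast_ne_zero.mpr (Nat.factorial_ne_zero e)
  -- Step 1: counting identity
  have hcount : ∀ x : SeqSpace, (NGcount G n edge M e x : ℝ) * (e.factorial : ℝ)
      = ∑ b ∈ Bf, ∏ i : Fin e, (if x (b i) then (1 : ℝ) else 0) := by
    intro x
    have h1 := card_mul_factorial e (EGset G n edge M e) hinj hperm x
    have h2 : Nat.card {b : Fin e → ℕ // b ∈ EGset G n edge M e ∧ ∀ i, x (b i) = true}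
        = (Bf.filter (fun b => ∀ i, x (b i) = true)).card := by
      rw [Nat.card_congr (Equiv.subtypeEquivRight
        (q := fun b => b ∈ Bf.filter (fun b => ∀ i, x (b i) = true))
        (fun b => by simp [Finset.mem_filter, hmemBf b]))]
      exact Nat.card_eq_finsetCard _
    have h4 : ∑ b ∈ Bf, ∏ i : Fin e, (if x (b i) then (1 : ℝ) else 0)
        = ((Bf.filter (fun b => ∀ i, x (b i) = true)).card : ℝ) := by
      rw [Finset.sum_congr rfl (fun b _ => Fintype.prod_boole), Finset.card_filter]
      push_cast
      refine Finset.sum_congr rfl fun b _ => ?_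
      split_ifs <;> simp
    rw [h4]
    have h5 : NGcount G n edge M e x * e.factorial
        = (Bf.filter (fun b => ∀ i, x (b i) = true)).card := h1.trans h2
    exact_mod_cast h5
  -- Step 2: the expectation
  have hA : ∀ b : Fin e → ℕ,
      MeasurableSet (⋂ i : Fin e, {ω' : SeqSpace | ω' (b i) = true}) := by
    intro b
    refine MeasurableSet.iInter fun i => ?_
    have hmeas : Measurable (fun ω' : SeqSpace => ω' (b i)) := measurable_pi_apply (b i)
    exact hmeas (measurableSet_singleton true)
  have hEN : ∫ x, (NGcount G n edge M e x : ℝ) ∂μ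
      = p ^ e * Bf.card / e.factorial := by
    have hfun : (fun x => (NGcount G n edge M e x : ℝ))
        = fun x => (e.factorial : ℝ)⁻¹ * ∑ b ∈ Bf,
            Set.indicator (⋂ i : Fin e, {ω' : SeqSpace | ω' (b i) = true})
              (fun _ => (1 : ℝ)) x := by
      funext x
      have h5 : ∑ b ∈ Bf, Set.indicator
            (⋂ i : Fin e, {ω' : SeqSpace | ω' (b i) = true}) (fun _ => (1 : ℝ)) x
          = ∑ b ∈ Bf, ∏ i : Fin e, (if x (b i) then (1 : ℝ) else 0) := by
        refine Finset.sum_congr rfl fun b _ => ?_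
        rw [Fintype.prod_boole]
        by_cases hx : x ∈ ⋂ i : Fin e, {ω' : SeqSpace | ω' (b i) = true}
        · have hxx : ∀ i, x (b i) = true := fun i => Set.mem_iInter.mp hx i
          rw [Set.indicator_of_mem hx, if_pos hxx]
        · rw [Set.indicator_of_notMem hx, if_neg]
          intro hall
          exact hx (Set.mem_iInter.mpr hall)
      rw [h5, ← hcount x]
      field_simp
    rw [hfun, MeasureTheory.integral_const_mul,
      MeasureTheory.integral_finset_sum _
        (fun b _ => (MeasureTheory.integrable_const (1 : ℝ)).indicator (hA b))]
    have h6 : ∀ b ∈ Bf, ∫ x, Set.indicator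
          (⋂ i : Fin e, {ω' : SeqSpace | ω' (b i) = true}) (fun _ => (1 : ℝ)) x ∂μ
        = p ^ e := by
      intro b hb
      rw [MeasureTheory.integral_indicator_const (1 : ℝ) (hA b), smul_eq_mul, mul_one, MeasureTheory.measureReal_def,
        meas_iInter_eq hμ b (hinj b ((hmemBf b).mp hb)),
        ENNReal.toReal_pow, ENNReal.toReal_ofReal hp0.le]
    rw [Finset.sum_congr rfl h6, Finset.sum_const, nsmul_eq_mul]
    field_simp
  -- Step 3: rewrite each multiple integral
  have hMI : ∀ k ∈ Finset.Icc 1 e, MI p k (fun b : Fin k → ℕ =>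
        (1 - p) ^ ((k : ℝ) / 2) * p ^ ((e : ℝ) - (k : ℝ) / 2)
          / ((Nat.factorial (e - k) : ℝ) * (Nat.factorial k : ℝ) * v)
          * gker G n edge M e k b) ω
      = ((1 - p) ^ ((k : ℝ) / 2) * p ^ ((e : ℝ) - (k : ℝ) / 2)
          / ((Nat.factorial (e - k) : ℝ) * (Nat.factorial k : ℝ) * v))
          * Sq e Bf p ω k := by
    intro k hk
    rw [Finset.mem_Icc] at hk
    exact MI_gker G n edge M e p ω k hk.2 _
  rw [Finset.sum_congr rfl hMI]
  -- Step 4: the expansion of the counting function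
  have hexp := (hcount ω).trans
    (sum_ind_eq e (EGset G n edge M e) hBfin hperm p hp0 hp1 ω)
  have hsplit : Finset.range (e + 1) = insert 0 (Finset.Icc 1 e) := by
    ext x
    simp only [Finset.mem_range, Finset.mem_insert, Finset.mem_Icc, Nat.lt_succ_iff]
    omega
  rw [← hBf] at hexp
  rw [hsplit, Finset.sum_insert (by simp)] at hexp
  simp only [Nat.sub_zero, pow_zero, Nat.choose_zero_right, Nat.cast_one, mul_one,
    one_mul, Sq_zero] at hexp
  -- Step 5: final algebra
  have hterm : ∀ k ∈ Finset.Icc 1 e,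
      ((1 - p) ^ ((k : ℝ) / 2) * p ^ ((e : ℝ) - (k : ℝ) / 2)
          / ((Nat.factorial (e - k) : ℝ) * (Nat.factorial k : ℝ) * v))
          * Sq e Bf p ω k
      = p ^ (e - k) * Real.sqrt (p * (1 - p)) ^ k * (e.choose k : ℝ) *
          Sq e Bf p ω k / ((e.factorial : ℝ) * v) := by
    intro k hk
    rw [Finset.mem_Icc] at hk
    rw [rpow_split p hp0 hp1 e k hk.2]
    have hcf : (e.factorial : ℝ)
        = (e.choose k : ℝ) * (k.factorial : ℝ) * ((e - k).factorial : ℝ) := by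
      exact_mod_cast (Nat.choose_mul_factorial_mul_factorial hk.2).symm
    rcases eq_or_ne v 0 with hv0 | hv0
    · simp [hv0]
    · have hkf : (k.factorial : ℝ) ≠ 0 := Nat.cast_ne_zero.mpr (Nat.factorial_ne_zero k)
      have hekf : ((e - k).factorial : ℝ) ≠ 0 :=
        Nat.cast_ne_zero.mpr (Nat.factorial_ne_zero (e - k))
      have hch : (e.choose k : ℝ) ≠ 0 :=
        Nat.cast_ne_zero.mpr (Nat.choose_pos hk.2).ne'
      rw [hcf]
      field_simp
  rw [Finset.sum_congr rfl hterm, ← Finset.sum_div]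
  have hsum : ∑ k ∈ Finset.Icc 1 e, p ^ (e - k) * Real.sqrt (p * (1 - p)) ^ k *
        (e.choose k : ℝ) * Sq e Bf p ω k
      = (NGcount G n edge M e ω : ℝ) * (e.factorial : ℝ) - p ^ e * Bf.card := by
    linarith [hexp]
  rw [hsum, hEN]
  have hnum : (NGcount G n edge M e ω : ℝ) - p ^ e * Bf.card / e.factorial
      = ((NGcount G n edge M e ω : ℝ) * (e.factorial : ℝ) - p ^ e * Bf.card)
          / (e.factorial : ℝ) := by
    field_simp
  rw [hnum, div_div]

end PaperC
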